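/- Let X, Y be independent exponential random variables with rates 1, and let a ≠ b with a, b > 0. Then E[log2(1 + aX + bY)] = (a/(a-b)) * C1(a) + (b/(b-a)) * C1(b), where C1(x) = (e^{1/x}/ln 2) * E1(1/x) and E1 is the exponential integral. -/

import Mathlib

open MeasureTheory Real

/-- The exponential integral `E1(x) = ∫₁^∞ e^{-xt}/t dt`. -/
noncomputable def expInt (x : ℝ) : ℝ := ∫ t in Set.Ioi (1:ℝ), Real.exp (-x * t) / t

/-- The ergodic capacity function `C1(x) = (e^{1/x}/ln 2) E1(1/x)`. -/
noncomputable def C1 (x : ℝ) : ℝ := Real.exp (1 / x) / Real.log 2 * expInt (1 / x)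

open Set Filter in
lemma my_integral_comp_add_right_Ioi (g : ℝ → ℝ) (a d : ℝ) :
    ∫ x in Ioi a, g (x + d) = ∫ x in Ioi (a + d), g x := by
  have h1 : MeasurableEmbedding (fun x : ℝ => x + d) :=
    (Homeomorph.addRight d).measurableEmbedding
  have h2 : MeasurePreserving (fun x : ℝ => x + d) volume volume :=
    measurePreserving_add_right volume d
  have := h2.setIntegral_preimage_emb h1 g (Ioi (a + d))
  rw [preimage_add_const_Ioi] at this
  simpa using this

-- integrability of x * exp (-x) on Ioi 0
open Set in
lemma integrable_id_mul_exp_neg : IntegrableOn (fun x : ℝ => x * Real.exp (-x)) (Ioi 0) := by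
  have h := Real.GammaIntegral_convergent (s := 2) (by norm_num)
  rw [show (2:ℝ) - 1 = 1 by norm_num] at h
  apply h.congr_fun ?_ measurableSet_Ioi
  intro x hx
  simp [Real.rpow_one, mul_comm]

open Set in
lemma integrable_inv_exp (r c : ℝ) (hr : 0 < r) (hc : 0 ≤ c) :
    IntegrableOn (fun y : ℝ => Real.exp (-y) / (r + c * y)) (Ioi 0) := by
  have hbound : ∀ y ∈ Ioi (0:ℝ), ‖Real.exp (-y) / (r + c * y)‖ ≤ Real.exp (-y) / r := by
    intro y hy
    have hy0 : 0 < y := hy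
    have hden : r ≤ r + c * y := by nlinarith
    have hdenpos : 0 < r + c * y := lt_of_lt_of_le hr hden
    rw [Real.norm_eq_abs, abs_of_nonneg (by positivity)]
    gcongr
  have hint : IntegrableOn (fun y : ℝ => Real.exp (-y) / r) (Ioi 0) := by
    simpa [IntegrableOn, div_eq_mul_inv, neg_mul, one_mul] using
      ((exp_neg_integrableOn_Ioi 0 (by norm_num : (0:ℝ) < 1)).mul_const r⁻¹)
  refine hint.mono' ?_ ?_
  · apply (ContinuousOn.aestronglyMeasurable ?_ measurableSet_Ioi)
    apply ContinuousOn.div (Continuous.continuousOn (by continuity))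
      (Continuous.continuousOn (by continuity))
    intro y hy
    have : (0:ℝ) < y := hy
    nlinarith
  · filter_upwards [ae_restrict_mem measurableSet_Ioi] with y hy using hbound y hy

open Set in
lemma integrable_log_mul_exp (r c : ℝ) (hr : 1 ≤ r) (hc : 0 ≤ c) :
    IntegrableOn (fun y : ℝ => Real.log (r + c * y) * Real.exp (-y)) (Ioi 0) := by
  have hint : IntegrableOn (fun y : ℝ => (r - 1 + c * y) * Real.exp (-y)) (Ioi 0) := by
    have h1 : IntegrableOn (fun y : ℝ => (r - 1) * Real.exp (-y)) (Ioi 0) := by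
      simpa [IntegrableOn, neg_mul, one_mul, mul_comm] using
        ((exp_neg_integrableOn_Ioi 0 (by norm_num : (0:ℝ) < 1)).const_mul (r - 1))
    have h2 := integrable_id_mul_exp_neg.const_mul c
    apply IntegrableOn.congr_fun (h1.add h2) ?_ measurableSet_Ioi
    intro x _; simp only [Pi.add_apply]; ring
  refine hint.mono' ?_ ?_
  · apply (ContinuousOn.aestronglyMeasurable ?_ measurableSet_Ioi)
    apply ContinuousOn.mul ?_ (Continuous.continuousOn (by continuity))
    apply ContinuousOn.log (Continuous.continuousOn (by continuity))
    intro y hy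
    have : (0:ℝ) < y := hy
    nlinarith
  · filter_upwards [ae_restrict_mem measurableSet_Ioi] with y hy
    have hy0 : 0 < y := hy
    have h1 : (1:ℝ) ≤ r + c * y := by nlinarith
    have hlog0 : 0 ≤ Real.log (r + c * y) := Real.log_nonneg h1
    have hlog : Real.log (r + c * y) ≤ r - 1 + c * y := by
      have := Real.log_le_sub_one_of_pos (x := r + c * y) (by linarith)
      linarith
    rw [Real.norm_eq_abs, abs_of_nonneg (by positivity)]
    have hc' : 0 ≤ r - 1 + c * y := by nlinarith
    exact mul_le_mul_of_nonneg_right hlog (Real.exp_pos _).le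

open Set Filter Topology in
lemma parts_lemma (r c : ℝ) (hr : 1 ≤ r) (hc : 0 < c) :
    ∫ y in Ioi (0:ℝ), Real.log (r + c * y) * Real.exp (-y)
      = Real.log r + c * ∫ y in Ioi (0:ℝ), Real.exp (-y) / (r + c * y) := by
  have hr0 : 0 < r := lt_of_lt_of_le one_pos hr
  set F : ℝ → ℝ := fun y => -(Real.exp (-y) * Real.log (r + c * y)) with hF
  set F' : ℝ → ℝ := fun y =>
    Real.log (r + c * y) * Real.exp (-y) - c * (Real.exp (-y) / (r + c * y)) with hF'
  have hderiv : ∀ y ∈ Ici (0:ℝ), HasDerivAt F (F' y) y := by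
    intro y hy
    have hy0 : (0:ℝ) ≤ y := hy
    have hpos : 0 < r + c * y := by nlinarith
    have h1 : HasDerivAt (fun y : ℝ => Real.exp (-y)) (-Real.exp (-y)) y := by
      simpa using (hasDerivAt_neg y).exp
    have h2 : HasDerivAt (fun y : ℝ => Real.log (r + c * y)) (c / (r + c * y)) y := by
      have ha : HasDerivAt (fun y : ℝ => r + c * y) c y := by
        simpa using ((hasDerivAt_id y).const_mul c).const_add r
      exact ha.log hpos.ne' 
    have h3 : HasDerivAt (fun y => -(Real.exp (-y) * Real.log (r + c * y)))
        (-(-Real.exp (-y) * Real.log (r + c * y) + Real.exp (-y) * (c / (r + c * y)))) y :=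
      (h1.mul h2).neg
    convert h3 using 1
    ring
  have hint1 := integrable_log_mul_exp r c hr hc.le
  have hint2 := (integrable_inv_exp r c hr0 hc.le).const_mul c
  have hintF' : IntegrableOn F' (Ioi 0) := hint1.sub hint2
  have htend : Tendsto F atTop (𝓝 0) := by
    have hbound : ∀ᶠ y in atTop, ‖Real.exp (-y) * Real.log (r + c * y)‖
        ≤ (r - 1) * Real.exp (-y) + c * (y * Real.exp (-y)) := by
      filter_upwards [eventually_ge_atTop (0:ℝ)] with y hy
      have h1 : (1:ℝ) ≤ r + c * y := by nlinarith
      have hlog0 : 0 ≤ Real.log (r + c * y) := Real.log_nonneg h1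
      have hlog : Real.log (r + c * y) ≤ r - 1 + c * y := by
        have := Real.log_le_sub_one_of_pos (x := r + c * y) (by linarith)
        linarith
      rw [Real.norm_eq_abs, abs_of_nonneg (by positivity)]
      nlinarith [Real.exp_pos (-y), mul_le_mul_of_nonneg_left hlog (Real.exp_pos (-y)).le]
    have hg : Tendsto (fun y : ℝ => (r - 1) * Real.exp (-y) + c * (y * Real.exp (-y)))
        atTop (𝓝 0) := by
      have t1 : Tendsto (fun y : ℝ => Real.exp (-y)) atTop (𝓝 0) :=
        Real.tendsto_exp_neg_atTop_nhds_zero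
      have t2 : Tendsto (fun y : ℝ => y * Real.exp (-y)) atTop (𝓝 0) := by
        simpa using Real.tendsto_pow_mul_exp_neg_atTop_nhds_zero 1
      simpa using (t1.const_mul (r - 1)).add (t2.const_mul c)
    have h0 : Tendsto (fun y : ℝ => Real.exp (-y) * Real.log (r + c * y)) atTop (𝓝 0) :=
      squeeze_zero_norm' hbound hg
    simpa [hF] using h0.neg
  have hmain := integral_Ioi_of_hasDerivAt_of_tendsto' hderiv hintF' htend
  have hF0 : F 0 = -Real.log r := by simp [hF]
  rw [hF0] at hmain
  have hsplit : ∫ y in Ioi (0:ℝ), F' y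
      = (∫ y in Ioi (0:ℝ), Real.log (r + c * y) * Real.exp (-y))
        - c * ∫ y in Ioi (0:ℝ), Real.exp (-y) / (r + c * y) := by
    rw [hF']
    rw [integral_sub hint1 hint2, integral_const_mul]
  rw [hsplit] at hmain
  linarith

open Set in
lemma exp_div_eq (c : ℝ) (hc : 0 < c) :
    ∫ x in Ioi (0:ℝ), Real.exp (-x) / (1 + c * x)
      = Real.exp (1 / c) / c * expInt (1 / c) := by
  set g : ℝ → ℝ := fun t => Real.exp (-(1 / c) * t) / t with hg
  have step1 : expInt (1 / c) = ∫ u in Ioi (0:ℝ), g (u + 1) := by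
    rw [expInt, my_integral_comp_add_right_Ioi g 0 1, zero_add]
  have step2 : ∫ x in Ioi (0:ℝ), g (c * x + 1) = c⁻¹ * ∫ u in Ioi (0:ℝ), g (u + 1) := by
    have := integral_comp_mul_left_Ioi (fun u => g (u + 1)) 0 hc
    simpa [mul_zero] using this
  have step3 : ∀ x ∈ Ioi (0:ℝ), g (c * x + 1)
      = Real.exp (-(1 / c)) * (Real.exp (-x) / (1 + c * x)) := by
    intro x hx
    show Real.exp (-(1 / c) * (c * x + 1)) / (c * x + 1)
        = Real.exp (-(1 / c)) * (Real.exp (-x) / (1 + c * x))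
    have h1 : -(1 / c) * (c * x + 1) = -x + -(1 / c) := by field_simp; ring
    rw [h1, Real.exp_add]
    ring
  have step4 : ∫ x in Ioi (0:ℝ), g (c * x + 1)
      = Real.exp (-(1 / c)) * ∫ x in Ioi (0:ℝ), Real.exp (-x) / (1 + c * x) := by
    rw [← integral_const_mul]
    exact setIntegral_congr_fun measurableSet_Ioi step3
  have : expInt (1 / c)
      = c * (Real.exp (-(1 / c)) * ∫ x in Ioi (0:ℝ), Real.exp (-x) / (1 + c * x)) := by
    have step2' : ∫ u in Ioi (0:ℝ), g (u + 1) = c * ∫ x in Ioi (0:ℝ), g (c * x + 1) := by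
      rw [step2]; field_simp
    rw [step1, step2', step4]
  rw [this, Real.exp_neg]
  field_simp
  ring
  congr 1; ext x; ring

open Set in
lemma single_integral (c : ℝ) (hc : 0 < c) :
    ∫ x in Ioi (0:ℝ), Real.log (1 + c * x) * Real.exp (-x)
      = Real.exp (1 / c) * expInt (1 / c) := by
  have h := parts_lemma 1 c le_rfl hc
  rw [h, exp_div_eq c hc, Real.log_one]
  field_simp
  ring


open Set in
lemma integrable_G (a b : ℝ) (ha : 0 < a) (hb : 0 < b) :
    Integrable (fun p : ℝ × ℝ => Real.exp (-p.1) * Real.exp (-p.2) / (1 + a * p.1 + b * p.2))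
      ((volume.restrict (Ioi 0)).prod (volume.restrict (Ioi 0))) := by
  have hExp : Integrable (fun x : ℝ => Real.exp (-x)) (volume.restrict (Ioi (0:ℝ))) := by
    simpa [IntegrableOn, neg_mul, one_mul] using exp_neg_integrableOn_Ioi (0:ℝ) one_pos
  have hdom : Integrable (fun p : ℝ × ℝ => Real.exp (-p.1) * Real.exp (-p.2))
      ((volume.restrict (Ioi 0)).prod (volume.restrict (Ioi 0))) := hExp.mul_prod hExp
  refine hdom.mono' ?_ ?_
  · apply Measurable.aestronglyMeasurable
    apply Measurable.div
    · exact (measurable_fst.neg.exp).mul (measurable_snd.neg.exp)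
    · exact (measurable_const.add (measurable_fst.const_mul a)).add (measurable_snd.const_mul b)
  · rw [Measure.prod_restrict]
    filter_upwards [ae_restrict_mem (measurableSet_Ioi.prod measurableSet_Ioi)] with p hp
    have hx : (0:ℝ) < p.1 := hp.1
    have hy : (0:ℝ) < p.2 := hp.2
    have hD : (1:ℝ) ≤ 1 + a * p.1 + b * p.2 := by nlinarith
    rw [Real.norm_eq_abs, abs_of_nonneg (by positivity)]
    exact div_le_self (by positivity) hD

open Set in
lemma integrable_H (a b : ℝ) (ha : 0 < a) (hb : 0 < b) :
    Integrable (fun p : ℝ × ℝ =>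
        Real.logb 2 (1 + a * p.1 + b * p.2) * (Real.exp (-p.1) * Real.exp (-p.2)))
      ((volume.restrict (Ioi 0)).prod (volume.restrict (Ioi 0))) := by
  have hExp : Integrable (fun x : ℝ => Real.exp (-x)) (volume.restrict (Ioi (0:ℝ))) := by
    simpa [IntegrableOn, neg_mul, one_mul] using exp_neg_integrableOn_Ioi (0:ℝ) one_pos
  have hL : (0:ℝ) < Real.log 2 := Real.log_pos one_lt_two
  have h1 : Integrable (fun p : ℝ × ℝ => (p.1 * Real.exp (-p.1)) * Real.exp (-p.2))
      ((volume.restrict (Ioi 0)).prod (volume.restrict (Ioi 0))) :=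
    integrable_id_mul_exp_neg.mul_prod hExp
  have h2 : Integrable (fun p : ℝ × ℝ => Real.exp (-p.1) * (p.2 * Real.exp (-p.2)))
      ((volume.restrict (Ioi 0)).prod (volume.restrict (Ioi 0))) :=
    hExp.mul_prod integrable_id_mul_exp_neg
  have hdom := (h1.const_mul (a / Real.log 2)).add (h2.const_mul (b / Real.log 2))
  refine hdom.mono' ?_ ?_
  · apply Measurable.aestronglyMeasurable
    have hDm : Measurable (fun p : ℝ × ℝ => 1 + a * p.1 + b * p.2) :=
      (measurable_const.add (measurable_fst.const_mul a)).add (measurable_snd.const_mul b)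
    have : Measurable (fun p : ℝ × ℝ => Real.logb 2 (1 + a * p.1 + b * p.2)) := by
      simp only [Real.logb]
      exact (Real.measurable_log.comp hDm).div_const _
    exact this.mul ((measurable_fst.neg.exp).mul (measurable_snd.neg.exp))
  · rw [Measure.prod_restrict]
    filter_upwards [ae_restrict_mem (measurableSet_Ioi.prod measurableSet_Ioi)] with p hp
    have hx : (0:ℝ) < p.1 := hp.1
    have hy : (0:ℝ) < p.2 := hp.2
    have hD : (1:ℝ) ≤ 1 + a * p.1 + b * p.2 := by nlinarith
    have hlog0 : 0 ≤ Real.log (1 + a * p.1 + b * p.2) := Real.log_nonneg hD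
    have hlog : Real.log (1 + a * p.1 + b * p.2) ≤ a * p.1 + b * p.2 := by
      have := Real.log_le_sub_one_of_pos (x := 1 + a * p.1 + b * p.2) (by linarith)
      linarith
    have hE : (0:ℝ) ≤ Real.exp (-p.1) * Real.exp (-p.2) := by positivity
    rw [Real.norm_eq_abs, Real.logb, abs_of_nonneg (by positivity)]
    calc Real.log (1 + a * p.1 + b * p.2) / Real.log 2 * (Real.exp (-p.1) * Real.exp (-p.2))
        ≤ (a * p.1 + b * p.2) / Real.log 2 * (Real.exp (-p.1) * Real.exp (-p.2)) := by
          gcongr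
      _ = a / Real.log 2 * (p.1 * Real.exp (-p.1) * Real.exp (-p.2))
          + b / Real.log 2 * (Real.exp (-p.1) * (p.2 * Real.exp (-p.2))) := by ring

open Set in
lemma swapH (a b : ℝ) (ha : 0 < a) (hb : 0 < b) :
    ∫ x in Ioi (0:ℝ), ∫ y in Ioi (0:ℝ),
        Real.logb 2 (1 + a * x + b * y) * (Real.exp (-x) * Real.exp (-y))
      = ∫ x in Ioi (0:ℝ), ∫ y in Ioi (0:ℝ),
          Real.logb 2 (1 + b * x + a * y) * (Real.exp (-x) * Real.exp (-y)) := by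
  rw [integral_integral_swap (by
    simpa [Function.uncurry_def] using integrable_H a b ha hb)]
  apply setIntegral_congr_fun measurableSet_Ioi
  intro x _
  apply setIntegral_congr_fun measurableSet_Ioi
  intro y _
  show Real.logb 2 (1 + a * y + b * x) * (Real.exp (-y) * Real.exp (-x))
      = Real.logb 2 (1 + b * x + a * y) * (Real.exp (-x) * Real.exp (-y))
  rw [show 1 + a * y + b * x = 1 + b * x + a * y by ring]
  ring

open Set in
lemma swapG (a b : ℝ) (ha : 0 < a) (hb : 0 < b) :
    ∫ x in Ioi (0:ℝ), ∫ y in Ioi (0:ℝ),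
        Real.exp (-x) * Real.exp (-y) / (1 + a * x + b * y)
      = ∫ x in Ioi (0:ℝ), ∫ y in Ioi (0:ℝ),
          Real.exp (-x) * Real.exp (-y) / (1 + b * x + a * y) := by
  rw [integral_integral_swap (by
    simpa [Function.uncurry_def] using integrable_G a b ha hb)]
  apply setIntegral_congr_fun measurableSet_Ioi
  intro x _
  apply setIntegral_congr_fun measurableSet_Ioi
  intro y _
  show Real.exp (-y) * Real.exp (-x) / (1 + a * y + b * x)
      = Real.exp (-x) * Real.exp (-y) / (1 + b * x + a * y)
  rw [show 1 + a * y + b * x = 1 + b * x + a * y by ring]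
  ring

open Set in
lemma key_lemma (a b : ℝ) (ha : 0 < a) (hb : 0 < b) :
    ∫ x in Ioi (0:ℝ), ∫ y in Ioi (0:ℝ),
        Real.logb 2 (1 + a * x + b * y) * (Real.exp (-x) * Real.exp (-y))
      = Real.exp (1 / a) * expInt (1 / a) / Real.log 2
        + b / Real.log 2 * ∫ x in Ioi (0:ℝ), ∫ y in Ioi (0:ℝ),
            Real.exp (-x) * Real.exp (-y) / (1 + a * x + b * y) := by
  have hL : (0:ℝ) < Real.log 2 := Real.log_pos one_lt_two
  have hinner : ∀ x ∈ Ioi (0:ℝ),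
      (∫ y in Ioi (0:ℝ), Real.logb 2 (1 + a * x + b * y) * (Real.exp (-x) * Real.exp (-y)))
        = Real.log (1 + a * x) * Real.exp (-x) / Real.log 2
          + b / Real.log 2 * ∫ y in Ioi (0:ℝ),
              Real.exp (-x) * Real.exp (-y) / (1 + a * x + b * y) := by
    intro x hx
    have hx0 : (0:ℝ) < x := hx
    have hr : (1:ℝ) ≤ 1 + a * x := by nlinarith
    have e1 : (∫ y in Ioi (0:ℝ), Real.logb 2 (1 + a * x + b * y)
          * (Real.exp (-x) * Real.exp (-y)))
        = Real.exp (-x) / Real.log 2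
          * ∫ y in Ioi (0:ℝ), Real.log (1 + a * x + b * y) * Real.exp (-y) := by
      rw [← integral_const_mul]
      apply setIntegral_congr_fun measurableSet_Ioi
      intro y _
      simp only [Real.logb]
      ring
    have e2 := parts_lemma (1 + a * x) b hr hb
    have e3 : (∫ y in Ioi (0:ℝ), Real.exp (-x) * Real.exp (-y) / (1 + a * x + b * y))
        = Real.exp (-x) * ∫ y in Ioi (0:ℝ), Real.exp (-y) / (1 + a * x + b * y) := by
      rw [← integral_const_mul]
      apply setIntegral_congr_fun measurableSet_Ioi
      intro y _
      ring
    rw [e1, e2, e3]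
    ring
  rw [setIntegral_congr_fun measurableSet_Ioi hinner]
  have hf1 : IntegrableOn
      (fun x : ℝ => Real.log (1 + a * x) * Real.exp (-x) / Real.log 2) (Ioi 0) :=
    (integrable_log_mul_exp 1 a le_rfl ha.le).div_const _
  have hf2 : Integrable
      (fun x : ℝ => ∫ y in Ioi (0:ℝ), Real.exp (-x) * Real.exp (-y) / (1 + a * x + b * y))
      (volume.restrict (Ioi 0)) := by
    simpa using (integrable_G a b ha hb).integral_prod_left
  rw [integral_add hf1 (hf2.const_mul (b / Real.log 2)), integral_div, integral_const_mul,
    single_integral a ha]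

/-- For independent `X, Y ~ Exp(1)` and distinct `a, b > 0`,
`E[log2(1 + aX + bY)] = (a/(a-b)) C1(a) + (b/(b-a)) C1(b)`. -/
theorem stmt_10 (a b : ℝ) (ha : 0 < a) (hb : 0 < b) (hab : a ≠ b) :
    ∫ x in Set.Ioi (0:ℝ), ∫ y in Set.Ioi (0:ℝ),
        Real.logb 2 (1 + a * x + b * y) * (Real.exp (-x) * Real.exp (-y))
      = a / (a - b) * C1 a + b / (b - a) * C1 b := by
  have hL : (0:ℝ) < Real.log 2 := Real.log_pos one_lt_two
  have hab' : a - b ≠ 0 := sub_ne_zero.mpr hab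
  have hba' : b - a ≠ 0 := sub_ne_zero.mpr (Ne.symm hab)
  have k1 := key_lemma a b ha hb
  have k2' := (swapH a b ha hb).trans ((key_lemma b a hb ha).trans
    (by rw [swapG b a hb ha]))
  simp only [C1]
  rw [show b / (b - a) = -(b / (a - b)) by rw [neg_div', div_eq_div_iff hba' hab']; ring]
  linear_combination (a / (a - b)) * k1 - (b / (a - b)) * k2'
    - (∫ x in Set.Ioi (0:ℝ), ∫ y in Set.Ioi (0:ℝ),
        Real.logb 2 (1 + a * x + b * y) * (Real.exp (-x) * Real.exp (-y)))
      * (mul_inv_cancel₀ hab')
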